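/- Let n, d ≥ 1 and let G be the OV-reduction graph built from sets A, B of n Boolean vectors in {0,1}^d, where every vector in A ∪ B has at least one coordinate equal to 1. Then the diameter of G equals 3 if there exist a ∈ A and b ∈ B with a · b = 0, and equals 2 otherwise. -/

import Mathlib

open SimpleGraph

abbrev OVVert (n d : ℕ) := (Fin n ⊕ Fin n) ⊕ (Fin d ⊕ Bool)

/-- vertex for `a ∈ A` -/
abbrev OVVert.vA {n d : ℕ} (a : Fin n) : OVVert n d := Sum.inl (Sum.inl a)
/-- vertex for `b ∈ B` -/
abbrev OVVert.vB {n d : ℕ} (b : Fin n) : OVVert n d := Sum.inl (Sum.inr b)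
/-- coordinate vertex `c_i` -/
abbrev OVVert.vC {n d : ℕ} (i : Fin d) : OVVert n d := Sum.inr (Sum.inl i)
/-- special vertex `x` -/
abbrev OVVert.vX {n d : ℕ} : OVVert n d := Sum.inr (Sum.inr false)
/-- special vertex `y` -/
abbrev OVVert.vY {n d : ℕ} : OVVert n d := Sum.inr (Sum.inr true)

def ovRel (n d : ℕ) (A B : Fin n → Fin d → Bool) : OVVert n d → OVVert n d → Prop
  | Sum.inl (Sum.inl a), Sum.inr (Sum.inl i) => A a i = true
  | Sum.inl (Sum.inr b), Sum.inr (Sum.inl i) => B b i = true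
  | Sum.inr (Sum.inr false), Sum.inl (Sum.inl _) => True
  | Sum.inr (Sum.inr true), Sum.inl (Sum.inr _) => True
  | Sum.inr (Sum.inr _), Sum.inr (Sum.inl _) => True
  | Sum.inr (Sum.inr false), Sum.inr (Sum.inr true) => True
  | _, _ => False

/-- The Roditty–Vassilevska-Williams OV-reduction graph. -/
def ovGraph (n d : ℕ) (A B : Fin n → Fin d → Bool) : SimpleGraph (OVVert n d) :=
  SimpleGraph.fromRel (ovRel n d A B)

structure TreeDecomposition {V : Type} (G : SimpleGraph V) where
  ι : Type
  tree : SimpleGraph ι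
  isTree : tree.IsTree
  bag : ι → Set V
  covers_vertex : ∀ v, ∃ t, v ∈ bag t
  covers_edge : ∀ ⦃u v⦄, G.Adj u v → ∃ t, u ∈ bag t ∧ v ∈ bag t
  bag_connected : ∀ v, (tree.induce {t | v ∈ bag t}).Connected

/-- The decomposition has width at most `w` (all bags of size at most `w+1`). -/
def TreeDecomposition.widthLE {V : Type} {G : SimpleGraph V}
    (D : TreeDecomposition G) (w : ℕ) : Prop :=
  ∀ t, (D.bag t).ncard ≤ w + 1

/-- Treewidth: the least `w` such that some tree decomposition has width `w`. -/
noncomputable def treewidth {V : Type} (G : SimpleGraph V) : ℕ :=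
  sInf {w | ∃ D : TreeDecomposition G, D.widthLE w}

section OVProof
open OVVert

variable {n d : ℕ} {A B : Fin n → Fin d → Bool}

private lemma ov_adj_xa (a : Fin n) : (ovGraph n d A B).Adj vX (vA a) := by
  simp [ovGraph, ovRel]
private lemma ov_adj_yb (b : Fin n) : (ovGraph n d A B).Adj vY (vB b) := by
  simp [ovGraph, ovRel]
private lemma ov_adj_xc (i : Fin d) : (ovGraph n d A B).Adj vX (vC i) := by
  simp [ovGraph, ovRel]
private lemma ov_adj_yc (i : Fin d) : (ovGraph n d A B).Adj vY (vC i) := by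
  simp [ovGraph, ovRel]
private lemma ov_adj_xy : (ovGraph n d A B).Adj vX vY := by
  simp [ovGraph, ovRel]
private lemma ov_adj_ac {a i} (h : A a i = true) : (ovGraph n d A B).Adj (vA a) (vC i) := by
  simp [ovGraph, ovRel, h]
private lemma ov_adj_bc {b i} (h : B b i = true) : (ovGraph n d A B).Adj (vB b) (vC i) := by
  simp [ovGraph, ovRel, h]

private lemma ov_nbr_a {a : Fin n} {w : OVVert n d} (h : (ovGraph n d A B).Adj (vA a) w) :
    w = vX ∨ ∃ i, w = vC i ∧ A a i = true := by
  rcases w with (a'|b')|(i|(_|_)) <;> simp_all [ovGraph, ovRel]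
private lemma ov_nbr_b {b : Fin n} {w : OVVert n d} (h : (ovGraph n d A B).Adj (vB b) w) :
    w = vY ∨ ∃ i, w = vC i ∧ B b i = true := by
  rcases w with (a'|b')|(i|(_|_)) <;> simp_all [ovGraph, ovRel]

private lemma edist_le_one_of_adj {V : Type} {G : SimpleGraph V} {u v : V} (h : G.Adj u v) :
    G.edist u v ≤ 1 := le_of_eq (SimpleGraph.edist_eq_one_iff_adj.mpr h)

private lemma edist_le_two_of {V : Type} {G : SimpleGraph V} {u v : V} (w : V)
    (h1 : G.Adj u w) (h2 : G.Adj w v) : G.edist u v ≤ 2 := by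
  have := SimpleGraph.edist_le (SimpleGraph.Walk.cons h1 (SimpleGraph.Walk.cons h2 SimpleGraph.Walk.nil))
  simpa using this

private lemma exists_of_edist_le_two {V : Type} {G : SimpleGraph V} {u v : V}
    (h : G.edist u v ≤ 2) : u = v ∨ G.Adj u v ∨ ∃ w, G.Adj u w ∧ G.Adj w v := by
  have hne : G.edist u v ≠ ⊤ := by
    intro ht; rw [ht] at h; exact (by simp : ¬ ((⊤ : ℕ∞) ≤ 2)) h
  obtain ⟨p, hp⟩ := (SimpleGraph.reachable_of_edist_ne_top hne).exists_walk_length_eq_edist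
  have hlen : (p.length : ℕ∞) ≤ 2 := hp ▸ h
  have hlen2 : p.length ≤ 2 := by exact_mod_cast hlen
  cases p with
  | nil => exact Or.inl rfl
  | cons h1 q =>
    cases q with
    | nil => exact Or.inr (Or.inl h1)
    | cons h2 r =>
      cases r with
      | nil => exact Or.inr (Or.inr ⟨_, h1, h2⟩)
      | cons h3 s => simp [SimpleGraph.Walk.length_cons] at hlen2

private lemma two_le_edist {V : Type} {G : SimpleGraph V} {u v : V}
    (hne : u ≠ v) (hna : ¬ G.Adj u v) : 2 ≤ G.edist u v := by
  have h1 : 1 < G.edist u v :=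
    lt_of_le_of_ne (Order.one_le_iff_pos.mpr (SimpleGraph.edist_pos_of_ne hne))
      (fun h => hna (SimpleGraph.edist_eq_one_iff_adj.mp h.symm))
  exact (ENat.add_one_le_iff (by simp)).mpr h1

set_option maxHeartbeats 1000000 in
theorem ovGraph_diam (n d : ℕ) (hn : 1 ≤ n) (hd : 1 ≤ d)
    (A B : Fin n → Fin d → Bool)
    (hA : ∀ a, ∃ i, A a i = true) (hB : ∀ b, ∃ i, B b i = true) :
    (ovGraph n d A B).diam =
      if ∃ a b, ∀ i, ¬(A a i = true ∧ B b i = true) then 3 else 2 := by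
  set G := ovGraph n d A B with hG
  -- every vertex is within edist 1 of x or y
  have hub : ∀ u : OVVert n d, ∃ h, (h = vX ∨ h = vY) ∧ G.edist u h ≤ 1 := by
    rintro ((a|b)|(i|(_|_)))
    · exact ⟨vX, Or.inl rfl, edist_le_one_of_adj (ov_adj_xa a).symm⟩
    · exact ⟨vY, Or.inr rfl, edist_le_one_of_adj (ov_adj_yb b).symm⟩
    · exact ⟨vX, Or.inl rfl, edist_le_one_of_adj (ov_adj_xc i).symm⟩
    · exact ⟨vX, Or.inl rfl, by simp [SimpleGraph.edist_self]⟩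
    · exact ⟨vY, Or.inr rfl, by simp [SimpleGraph.edist_self]⟩
  have hubdist : ∀ h1 h2 : OVVert n d, (h1 = vX ∨ h1 = vY) → (h2 = vX ∨ h2 = vY) →
      G.edist h1 h2 ≤ 1 := by
    rintro _ _ (rfl|rfl) (rfl|rfl)
    · simp [SimpleGraph.edist_self]
    · exact edist_le_one_of_adj ov_adj_xy
    · exact edist_le_one_of_adj ov_adj_xy.symm
    · simp [SimpleGraph.edist_self]
  have d3 : ∀ u v : OVVert n d, G.edist u v ≤ 3 := by
    intro u v
    obtain ⟨h1, hh1, hd1⟩ := hub u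
    obtain ⟨h2, hh2, hd2⟩ := hub v
    calc G.edist u v ≤ G.edist u h1 + G.edist h1 v := SimpleGraph.edist_triangle
    _ ≤ G.edist u h1 + (G.edist h1 h2 + G.edist h2 v) :=
        add_le_add le_rfl SimpleGraph.edist_triangle
    _ ≤ 1 + (1 + 1) := by
        exact add_le_add hd1 (add_le_add (hubdist h1 h2 hh1 hh2)
          (SimpleGraph.edist_comm ▸ hd2))
    _ = 3 := by norm_num
  by_cases hO : ∃ a b, ∀ i, ¬(A a i = true ∧ B b i = true)
  · rw [if_pos hO]
    obtain ⟨a, b, hab⟩ := hO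
    have hna : ¬ G.Adj (vA a) (vB b) := by
      intro h
      rcases ov_nbr_a h with h' | ⟨i, h', _⟩ <;> simp at h'
    have hnc : ∀ w, ¬ (G.Adj (vA a) w ∧ G.Adj w (vB b)) := by
      rintro w ⟨h1, h2⟩
      rcases ov_nbr_a h1 with rfl | ⟨i, rfl, hi⟩ <;>
        rcases ov_nbr_b h2.symm with h' | ⟨j, h', hj⟩
      · simp at h'
      · simp at h'
      · simp at h'
      · have : i = j := by simpa using h'
        exact hab i ⟨hi, this ▸ hj⟩
    have h3 : 3 ≤ G.edist (vA a) (vB b) := by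
      by_contra h
      push_neg at h
      have hle2 : G.edist (vA a) (vB b) ≤ 2 := by
        have : G.edist (vA a) (vB b) < 2 + 1 := by norm_num at h ⊢; exact h
        exact (ENat.lt_add_one_iff (by simp)).mp this
      rcases exists_of_edist_le_two hle2 with h' | h' | ⟨w, hw⟩
      · simp at h'
      · exact hna h'
      · exact hnc w hw
    have hediam : G.ediam = 3 := by
      apply le_antisymm (SimpleGraph.ediam_le_of_edist_le fun u v => d3 u v)
      exact le_trans h3 SimpleGraph.edist_le_ediam
    rw [SimpleGraph.diam, hediam]
    rfl
  · rw [if_neg hO]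
    push_neg at hO
    have hcom : ∀ a b, ∃ i, A a i = true ∧ B b i = true := hO
    have d2 : ∀ u v : OVVert n d, G.edist u v ≤ 2 := by
      rintro ((a|b)|(i|(_|_))) ((a'|b')|(i'|(_|_)))
      · exact edist_le_two_of vX (ov_adj_xa a).symm (ov_adj_xa a')
      · obtain ⟨i, hi, hi'⟩ := hcom a b'
        exact edist_le_two_of (vC i) (ov_adj_ac hi) (ov_adj_bc hi').symm
      · exact edist_le_two_of vX (ov_adj_xa a).symm (ov_adj_xc i')
      · exact le_trans (edist_le_one_of_adj (ov_adj_xa a).symm) (by norm_num)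
      · exact edist_le_two_of vX (ov_adj_xa a).symm ov_adj_xy
      · obtain ⟨i, hi, hi'⟩ := hcom a' b
        exact edist_le_two_of (vC i) (ov_adj_bc hi') (ov_adj_ac hi).symm
      · exact edist_le_two_of vY (ov_adj_yb b).symm (ov_adj_yb b')
      · exact edist_le_two_of vY (ov_adj_yb b).symm (ov_adj_yc i')
      · exact edist_le_two_of vY (ov_adj_yb b).symm ov_adj_xy.symm
      · exact le_trans (edist_le_one_of_adj (ov_adj_yb b).symm) (by norm_num)
      · exact edist_le_two_of vX (ov_adj_xc i).symm (ov_adj_xa a')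
      · exact edist_le_two_of vY (ov_adj_yc i).symm (ov_adj_yb b')
      · exact edist_le_two_of vX (ov_adj_xc i).symm (ov_adj_xc i')
      · exact le_trans (edist_le_one_of_adj (ov_adj_xc i).symm) (by norm_num)
      · exact le_trans (edist_le_one_of_adj (ov_adj_yc i).symm) (by norm_num)
      · exact le_trans (edist_le_one_of_adj (ov_adj_xa a')) (by norm_num)
      · exact edist_le_two_of vY ov_adj_xy (ov_adj_yb b')
      · exact le_trans (edist_le_one_of_adj (ov_adj_xc i')) (by norm_num)
      · simp [SimpleGraph.edist_self]
      · exact le_trans (edist_le_one_of_adj ov_adj_xy) (by norm_num)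
      · exact edist_le_two_of vX ov_adj_xy.symm (ov_adj_xa a')
      · exact le_trans (edist_le_one_of_adj (ov_adj_yb b')) (by norm_num)
      · exact le_trans (edist_le_one_of_adj (ov_adj_yc i')) (by norm_num)
      · exact le_trans (edist_le_one_of_adj ov_adj_xy.symm) (by norm_num)
      · simp [SimpleGraph.edist_self]
    have hb0 : (⟨0, hn⟩ : Fin n) = ⟨0, hn⟩ := rfl
    have h2 : 2 ≤ G.edist vX (vB (⟨0, hn⟩ : Fin n)) := by
      apply two_le_edist
      · simp
      · intro h
        simp [hG, ovGraph, ovRel] at h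
    have hediam : G.ediam = 2 := by
      apply le_antisymm (SimpleGraph.ediam_le_of_edist_le fun u v => d2 u v)
      exact le_trans h2 SimpleGraph.edist_le_ediam
    rw [SimpleGraph.diam, hediam]
    rfl

end OVProof
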